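/- Let {θ_m}_{m≥1} be an orthonormal sequence of eigenfunctions of R_XX with eigenvalues λ_Xm > 0 whose closed span is ker(R_XX)^⊥, and let {e_j}_{j≥1} be any orthonormal basis of L²(T₂). Then g ∈ L²(T₁×T₂) lies in the range of Γ_XX if and only if g ⊥ ker(Γ_XX) and ∑_{m,j=1}^∞ λ_Xm^{-2} ⟨g, θ_m⊗e_j⟩² < ∞. -/

import Mathlib

open MeasureTheory Filter
open scoped RealInnerProductSpace ENNReal NNReal Topology

noncomputable section

namespace FLR

/-- Lebesgue measure on the compact interval `[a, b] ⊆ ℝ`. -/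
abbrev leb (a b : ℝ) : Measure ℝ := volume.restrict (Set.Icc a b)

variable {α β Ω : Type*} [MeasurableSpace α] [MeasurableSpace β] [MeasurableSpace Ω]

/-- The elementary tensor `u ⊗ v`, i.e. `(u ⊗ v)(s,t) = u s * v t`, as an element of
`L²(μ × ν)`. -/
def tensor {μ : Measure α} {ν : Measure β} [SigmaFinite μ] [SigmaFinite ν]
    (u : Lp ℝ 2 μ) (v : Lp ℝ 2 ν) : Lp ℝ 2 (μ.prod ν) :=
  MemLp.toLp (fun p : α × β => u p.1 * v p.2) (by
    have hm : AEStronglyMeasurable (fun p : α × β => u p.1 * v p.2) (μ.prod ν) :=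
      (Lp.aestronglyMeasurable u).comp_fst.mul (Lp.aestronglyMeasurable v).comp_snd
    rw [memLp_two_iff_integrable_sq hm]
    have h : (fun p : α × β => (u p.1 * v p.2) ^ 2)
        = fun p : α × β => ((u : α → ℝ) p.1) ^ 2 * ((v : β → ℝ) p.2) ^ 2 := by
      funext p; ring
    rw [h]
    exact (Lp.memLp u).integrable_sq.mul_prod (Lp.memLp v).integrable_sq)

/-- Cross-covariance operator `R_{ZW} u = E[⟨u, W⟩ Z]` of a pair of random elements
(a Bochner integral). -/
def covOp {μ : Measure α} {ν : Measure β} (P : Measure Ω)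
    (Z : Ω → Lp ℝ 2 μ) (W : Ω → Lp ℝ 2 ν) (u : Lp ℝ 2 ν) : Lp ℝ 2 μ :=
  ∫ ω, ⟪u, W ω⟫ • Z ω ∂P

/-- The integral operator `(T_b u)(t) = ∫ b(s,t) u(s) ds` with kernel `b ∈ L²(μ × ν)`;
it maps `L²(μ)` into `L²(ν)`. -/
def intOp {μ : Measure α} {ν : Measure β} [SigmaFinite μ] [SigmaFinite ν]
    (b : Lp ℝ 2 (μ.prod ν)) (u : Lp ℝ 2 μ) : Lp ℝ 2 ν := by
  classical
  exact if h : MemLp (fun t : β => ∫ s, b (s, t) * u s ∂μ) 2 ν then h.toLp _ else 0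

variable {μ : Measure α} {ν : Measure β} [SigmaFinite μ] [SigmaFinite ν]

lemma tensor_coeFn (u : Lp ℝ 2 μ) (v : Lp ℝ 2 ν) :
    ⇑(tensor u v) =ᵐ[μ.prod ν] fun p : α × β => u p.1 * v p.2 :=
  MemLp.coeFn_toLp _

lemma inner_tensor (u u' : Lp ℝ 2 μ) (v v' : Lp ℝ 2 ν) :
    ⟪tensor u v, tensor u' v'⟫ = ⟪u, u'⟫ * ⟪v, v'⟫ := by
  rw [L2.inner_def, L2.inner_def, L2.inner_def]
  have h1 : (fun p : α × β => ⟪tensor u v p, tensor u' v' p⟫)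
      =ᵐ[μ.prod ν] fun p => (u p.1 * u' p.1) * (v p.2 * v' p.2) := by
    filter_upwards [tensor_coeFn u v, tensor_coeFn u' v'] with p h1 h2
    simp [h1, h2, RCLike.inner_apply]
    ring
  rw [integral_congr_ae h1]
  rw [integral_prod_mul (μ := μ) (ν := ν) (fun s => u s * u' s) (fun t => v t * v' t)]
  congr 1 <;> · apply integral_congr_ae; filter_upwards with x; simp [RCLike.inner_apply, mul_comm]

lemma tensor_add_left (u u' : Lp ℝ 2 μ) (v : Lp ℝ 2 ν) :
    tensor (u + u') v = tensor u v + tensor u' v := by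
  ext1
  filter_upwards [tensor_coeFn (u + u') v, tensor_coeFn u v, tensor_coeFn u' v,
    Lp.coeFn_add (tensor u v) (tensor u' v),
    (Measure.quasiMeasurePreserving_fst (μ := μ) (ν := ν)).ae_eq_comp
      (Lp.coeFn_add u u')] with p h1 h2 h3 h4 h5
  simp only [h1, h4, Pi.add_apply, h2, h3]
  have : (⇑(u + u') ∘ Prod.fst) p = ((⇑u + ⇑u') ∘ Prod.fst) p := h5
  simp only [Function.comp_apply, Pi.add_apply] at this
  rw [this]; ring

lemma tensor_smul_left (c : ℝ) (u : Lp ℝ 2 μ) (v : Lp ℝ 2 ν) :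
    tensor (c • u) v = c • tensor u v := by
  ext1
  filter_upwards [tensor_coeFn (c • u) v, tensor_coeFn u v,
    Lp.coeFn_smul c (tensor u v),
    (Measure.quasiMeasurePreserving_fst (μ := μ) (ν := ν)).ae_eq_comp
      (Lp.coeFn_smul c u)] with p h1 h2 h3 h4
  simp only [h1, h3, Pi.smul_apply, h2, smul_eq_mul]
  have : (⇑(c • u) ∘ Prod.fst) p = ((c • ⇑u) ∘ Prod.fst) p := h4
  simp only [Function.comp_apply, Pi.smul_apply, smul_eq_mul] at this
  rw [this]; ring

lemma tensor_add_right (u : Lp ℝ 2 μ) (v v' : Lp ℝ 2 ν) :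
    tensor u (v + v') = tensor u v + tensor u v' := by
  ext1
  filter_upwards [tensor_coeFn u (v + v'), tensor_coeFn u v, tensor_coeFn u v',
    Lp.coeFn_add (tensor u v) (tensor u v'),
    (Measure.quasiMeasurePreserving_snd (μ := μ) (ν := ν)).ae_eq_comp
      (Lp.coeFn_add v v')] with p h1 h2 h3 h4 h5
  simp only [h1, h4, Pi.add_apply, h2, h3]
  have : (⇑(v + v') ∘ Prod.snd) p = ((⇑v + ⇑v') ∘ Prod.snd) p := h5
  simp only [Function.comp_apply, Pi.add_apply] at this
  rw [this]; ring

lemma tensor_smul_right (c : ℝ) (u : Lp ℝ 2 μ) (v : Lp ℝ 2 ν) :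
    tensor u (c • v) = c • tensor u v := by
  ext1
  filter_upwards [tensor_coeFn u (c • v), tensor_coeFn u v,
    Lp.coeFn_smul c (tensor u v),
    (Measure.quasiMeasurePreserving_snd (μ := μ) (ν := ν)).ae_eq_comp
      (Lp.coeFn_smul c v)] with p h1 h2 h3 h4
  simp only [h1, h3, Pi.smul_apply, h2, smul_eq_mul]
  have : (⇑(c • v) ∘ Prod.snd) p = ((c • ⇑v) ∘ Prod.snd) p := h4
  simp only [Function.comp_apply, Pi.smul_apply, smul_eq_mul] at this
  rw [this]; ring

lemma norm_tensor (u : Lp ℝ 2 μ) (v : Lp ℝ 2 ν) : ‖tensor u v‖ = ‖u‖ * ‖v‖ := by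
  have h := inner_tensor u u v v
  rw [real_inner_self_eq_norm_sq, real_inner_self_eq_norm_sq, real_inner_self_eq_norm_sq] at h
  have h2 : ‖tensor u v‖ ^ 2 = (‖u‖ * ‖v‖) ^ 2 := by rw [h]; ring
  have := (sq_eq_sq_iff_abs_eq_abs _ _).mp h2
  rwa [abs_of_nonneg (norm_nonneg _), abs_of_nonneg (by positivity)] at this

lemma indicatorConstLp_congr {p : ℝ≥0∞} {s t : Set α} (h : s = t) (hs : MeasurableSet s)
    (hμs : μ s ≠ ∞) (ht : MeasurableSet t) (hμt : μ t ≠ ∞) (c : ℝ) :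
    indicatorConstLp p hs hμs c = indicatorConstLp p ht hμt c := by
  subst h; rfl

lemma tensor_indicator {s : Set α} {t : Set β} (hs : MeasurableSet s) (ht : MeasurableSet t)
    (hμs : μ s ≠ ∞) (hνt : ν t ≠ ∞) (c : ℝ) :
    tensor (indicatorConstLp 2 hs hμs c) (indicatorConstLp 2 ht hνt (1 : ℝ)) =
      indicatorConstLp 2 (hs.prod ht) (by
        rw [Measure.prod_prod]; exact ENNReal.mul_ne_top hμs hνt) c := by
  ext1
  filter_upwards [tensor_coeFn (indicatorConstLp 2 hs hμs c) (indicatorConstLp 2 ht hνt 1),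
    indicatorConstLp_coeFn (p := 2) (hs := hs.prod ht)
      (hμs := by rw [Measure.prod_prod]; exact ENNReal.mul_ne_top hμs hνt) (c := c),
    (Measure.quasiMeasurePreserving_fst (μ := μ) (ν := ν)).ae_eq_comp
      (indicatorConstLp_coeFn (p := 2) (hs := hs) (hμs := hμs) (c := c)),
    (Measure.quasiMeasurePreserving_snd (μ := μ) (ν := ν)).ae_eq_comp
      (indicatorConstLp_coeFn (p := 2) (hs := ht) (hμs := hνt) (c := (1:ℝ)))]
    with p h1 h2 h3 h4
  rw [h1, h2]
  have h3' : (indicatorConstLp 2 hs hμs c) p.1 = s.indicator (fun _ => c) p.1 := h3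
  have h4' : (indicatorConstLp 2 ht hνt 1) p.2 = t.indicator (fun _ => (1:ℝ)) p.2 := h4
  rw [h3', h4']
  by_cases hps : p.1 ∈ s <;> by_cases hpt : p.2 ∈ t <;>
    simp [Set.indicator_apply, hps, hpt, Set.mem_prod]

section Dense
variable [IsFiniteMeasure μ] [IsFiniteMeasure ν]

/-- The span of elementary tensors is dense in `L²` of the product. -/
lemma dense_tensor :
    (Submodule.span ℝ {w : Lp ℝ 2 (μ.prod ν) | ∃ u v, w = tensor u v}).topologicalClosure
      = ⊤ := by
  set V := (Submodule.span ℝ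
    {w : Lp ℝ 2 (μ.prod ν) | ∃ u v, w = tensor u v}).topologicalClosure with hV
  -- every indicator of a measurable set lies in V
  have key : ∀ t : Set (α × β), MeasurableSet t → ∀ (ht : MeasurableSet t) (c : ℝ),
      indicatorConstLp 2 ht (measure_ne_top (μ.prod ν) _) c ∈ V := by
    have huniv : ∀ (h : MeasurableSet (Set.univ : Set (α × β))) (c : ℝ),
        indicatorConstLp 2 h (measure_ne_top (μ.prod ν) _) c ∈ V := by
      intro h c
      have : indicatorConstLp 2 h (measure_ne_top (μ.prod ν) _) c =
          tensor (indicatorConstLp 2 MeasurableSet.univ (measure_ne_top μ _) c)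
            (indicatorConstLp 2 MeasurableSet.univ (measure_ne_top ν _) (1 : ℝ)) := by
        rw [tensor_indicator]
        exact indicatorConstLp_congr Set.univ_prod_univ.symm _ _ _ _ _
      rw [this]
      exact Submodule.le_topologicalClosure _
        (Submodule.subset_span ⟨_, _, rfl⟩)
    refine MeasurableSpace.induction_on_inter generateFrom_prod.symm isPiSystem_prod ?_ ?_ ?_ ?_
    · intro he c
      have : indicatorConstLp 2 he (measure_ne_top (μ.prod ν) _) c
          = (0 : Lp ℝ 2 (μ.prod ν)) := indicatorConstLp_empty
      rw [this]; exact V.zero_mem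
    · rintro t ⟨s₁, hs₁, s₂, hs₂, rfl⟩ ht c
      have : indicatorConstLp 2 ht (measure_ne_top (μ.prod ν) _) c =
          tensor (indicatorConstLp 2 hs₁ (measure_ne_top μ _) c)
            (indicatorConstLp 2 hs₂ (measure_ne_top ν _) (1 : ℝ)) := by
        rw [tensor_indicator]
      rw [this]
      exact Submodule.le_topologicalClosure _ (Submodule.subset_span ⟨_, _, rfl⟩)
    · intro t htm hC htc c
      have hsplit : indicatorConstLp 2 (htm.union htm.compl)
          (measure_ne_top (μ.prod ν) _) c =
          indicatorConstLp 2 htm (measure_ne_top (μ.prod ν) _) c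
            + indicatorConstLp 2 htm.compl (measure_ne_top (μ.prod ν) _) c :=
        indicatorConstLp_disjoint_union htm htm.compl _ _ disjoint_compl_right c
      have huniv' : indicatorConstLp 2 (htm.union htm.compl) (measure_ne_top (μ.prod ν) _) c
          = indicatorConstLp 2 (MeasurableSet.univ : MeasurableSet (Set.univ : Set (α × β))) (measure_ne_top (μ.prod ν) _) c :=
        indicatorConstLp_congr (Set.union_compl_self t) _ _ _ _ _
      have : indicatorConstLp 2 htm.compl (measure_ne_top (μ.prod ν) _) c =
          indicatorConstLp 2 (MeasurableSet.univ : MeasurableSet (Set.univ : Set (α × β))) (measure_ne_top (μ.prod ν) _) c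
            - indicatorConstLp 2 htm (measure_ne_top (μ.prod ν) _) c := by
        rw [← huniv', hsplit]; abel
      rw [this]
      exact V.sub_mem (huniv _ c) (hC htm c)
    · intro f hdisj hmeas hC ht c
      -- partial unions
      set T : ℕ → Set (α × β) := fun n => ⋃ i ∈ Finset.range n, f i with hT
      have hTm : ∀ n, MeasurableSet (T n) := fun n =>
        (Finset.range n).measurableSet_biUnion (fun i _ => hmeas i)
      have hTmem : ∀ n, indicatorConstLp 2 (hTm n) (measure_ne_top (μ.prod ν) _) c ∈ V := by
        intro n
        induction n with
        | zero =>
          have : indicatorConstLp 2 (hTm 0) (measure_ne_top (μ.prod ν) _) c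
              = indicatorConstLp 2 (MeasurableSet.empty : MeasurableSet (∅ : Set (α × β)))
                (measure_ne_top (μ.prod ν) _) c :=
            indicatorConstLp_congr (by simp [hT]) _ _ _ _ _
          rw [this, indicatorConstLp_empty]; exact V.zero_mem
        | succ n ih =>
          have hdisj' : Disjoint (T n) (f n) := by
            rw [hT]
            simp only [Set.disjoint_iUnion_left]
            intro i hi
            exact hdisj (by simp at hi; omega)
          have hstep : indicatorConstLp 2 ((hTm n).union (hmeas n)) (measure_ne_top (μ.prod ν) _) c =
              indicatorConstLp 2 (hTm n) (measure_ne_top (μ.prod ν) _) c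
                + indicatorConstLp 2 (hmeas n) (measure_ne_top (μ.prod ν) _) c :=
            indicatorConstLp_disjoint_union (hTm n) (hmeas n) _ _ hdisj' c
          have hTsucc : indicatorConstLp 2 (hTm (n+1)) (measure_ne_top (μ.prod ν) _) c
              = indicatorConstLp 2 ((hTm n).union (hmeas n)) (measure_ne_top (μ.prod ν) _) c :=
            indicatorConstLp_congr (by
              rw [hT]
              simp [Finset.range_add_one, Set.iUnion_union_distrib, Set.union_comm]
              ) _ _ _ _ _
          rw [hTsucc, hstep]
          exact V.add_mem ih (hC n (hmeas n) c)
      -- convergence of partial unions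
      have htend : Tendsto (fun n => μ.prod ν (symmDiff (T n) (⋃ i, f i))) atTop (𝓝 0) := by
        have hsub : ∀ n, symmDiff (T n) (⋃ i, f i) ⊆ ⋃ i, f (i + n) := by
          intro n x hx
          rw [Set.symmDiff_def] at hx
          rcases hx with hx | hx
          · exact absurd (Set.mem_iUnion.2 (by
              rcases Set.mem_iUnion₂.1 hx.1 with ⟨i, _, hxi⟩; exact ⟨i, hxi⟩)) hx.2
          · rcases Set.mem_iUnion.1 hx.1 with ⟨j, hj⟩
            have hjn : ¬ j < n := by
              intro hlt
              exact hx.2 (Set.mem_biUnion (Finset.mem_range.2 hlt) hj)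
            exact Set.mem_iUnion.2 ⟨j - n, by rwa [Nat.sub_add_cancel (not_lt.1 hjn)]⟩
        have hsum : (∑' i, μ.prod ν (f i)) ≠ ∞ := by
          rw [← measure_iUnion hdisj hmeas]
          exact measure_ne_top _ _
        have htail := ENNReal.tendsto_sum_nat_add (fun i => μ.prod ν (f i)) hsum
        refine tendsto_of_tendsto_of_tendsto_of_le_of_le tendsto_const_nhds htail
          (fun n => zero_le) (fun n => ?_)
        exact le_trans (measure_mono (hsub n)) (measure_iUnion_le _)
      have hlim := tendsto_indicatorConstLp_set (c := c) (hs := MeasurableSet.iUnion hmeas)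
        (hμs := measure_ne_top _ _) (ht := hTm) (hμt := fun n => measure_ne_top _ _)
        (by norm_num : (2 : ℝ≥0∞) ≠ ∞) htend
      exact (Submodule.isClosed_topologicalClosure _).mem_of_tendsto hlim
        (Eventually.of_forall hTmem)
  -- use Lp.induction
  rw [Submodule.eq_top_iff']
  intro g
  refine Lp.induction (by norm_num : (2 : ℝ≥0∞) ≠ ∞) (fun g => g ∈ V) ?_ ?_ ?_ g
  · intro c s hs hμs
    have : (Lp.simpleFunc.indicatorConst 2 hs hμs.ne c : Lp ℝ 2 (μ.prod ν))
        = indicatorConstLp 2 hs (measure_ne_top (μ.prod ν) _) c := rfl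
    rw [this]
    exact key s hs hs c
  · intro f' g' hf' hg' _ hPf hPg
    exact V.add_mem hPf hPg
  · exact Submodule.isClosed_topologicalClosure _

end Dense

section Hilbert
variable {H : Type*} [NormedAddCommGroup H] [InnerProductSpace ℝ H]

/-- A continuous linear functional vanishing on a submodule vanishes on its closure. -/
lemma clm_zero_of_closure {V : Submodule ℝ H} {f : H →L[ℝ] ℝ}
    (h0 : ∀ x ∈ V, f x = 0) {x : H} (hx : x ∈ V.topologicalClosure) : f x = 0 := by
  have hle : V ≤ LinearMap.ker (f : H →ₗ[ℝ] ℝ) := fun y hy => LinearMap.mem_ker.2 (h0 y hy)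
  exact LinearMap.mem_ker.1
    (Submodule.topologicalClosure_minimal V hle (ContinuousLinearMap.isClosed_ker f) hx)

lemma inner_zero_of_closure {S : Set H} {h : H} (h0 : ∀ s ∈ S, ⟪h, s⟫ = 0) {x : H}
    (hx : x ∈ (Submodule.span ℝ S).topologicalClosure) : ⟪h, x⟫ = 0 := by
  have : ∀ y ∈ Submodule.span ℝ S, ⟪h, y⟫ = 0 := by
    intro y hy
    induction hy using Submodule.span_induction with
    | mem z hz => exact h0 z hz
    | zero => simp
    | add a b _ _ ha hb => rw [inner_add_right, ha, hb, add_zero]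
    | smul c a _ ha => rw [real_inner_smul_right, ha, mul_zero]
  exact clm_zero_of_closure (f := innerSL ℝ h) this hx

end Hilbert

section TensorCLM
variable {μ : Measure α} {ν : Measure β} [SigmaFinite μ] [SigmaFinite ν]

/-- `tensor · v` as a continuous linear map. -/
def tensorLeftCLM (v : Lp ℝ 2 ν) : Lp ℝ 2 μ →L[ℝ] Lp ℝ 2 (μ.prod ν) :=
  LinearMap.mkContinuous
    { toFun := fun u => tensor u v
      map_add' := fun u u' => tensor_add_left u u' v
      map_smul' := fun c u => tensor_smul_left c u v } ‖v‖
    (fun u => by show ‖tensor u v‖ ≤ _; rw [norm_tensor]; rw [mul_comm])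

/-- `tensor u ·` as a continuous linear map. -/
def tensorRightCLM (u : Lp ℝ 2 μ) : Lp ℝ 2 ν →L[ℝ] Lp ℝ 2 (μ.prod ν) :=
  LinearMap.mkContinuous
    { toFun := fun v => tensor u v
      map_add' := fun v v' => tensor_add_right u v v'
      map_smul' := fun c v => tensor_smul_right c u v } ‖u‖
    (fun v => by show ‖tensor u v‖ ≤ _; rw [norm_tensor])

@[simp] lemma tensorLeftCLM_apply (v : Lp ℝ 2 ν) (u : Lp ℝ 2 μ) :
    tensorLeftCLM (μ := μ) v u = tensor u v := rfl

@[simp] lemma tensorRightCLM_apply (u : Lp ℝ 2 μ) (v : Lp ℝ 2 ν) :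
    tensorRightCLM (ν := ν) u v = tensor u v := rfl

end TensorCLM


set_option maxHeartbeats 2000000 in
/-- range of `Γ_XX`: let `R_XX` be a positive self-adjoint trace-class
operator on `L²(T₁)`, `{θ_m}` an orthonormal sequence of eigenfunctions of `R_XX` with
eigenvalues `λ_Xm > 0` whose closed span is `ker(R_XX)ᗮ`, and `{e_j}` any orthonormal basis
of `L²(T₂)`.  Then `g ∈ L²(T₁×T₂)` lies in the range of `Γ_XX` iff `g ⟂ ker(Γ_XX)` and
`∑_{m,j} λ_Xm⁻² ⟨g, θ_m ⊗ e_j⟩² < ∞`. -/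
theorem mem_range_gamma_iff
    (a₁ b₁ a₂ b₂ : ℝ)
    (Rxx : Lp ℝ 2 (leb a₁ b₁) →L[ℝ] Lp ℝ 2 (leb a₁ b₁))
    (hsa : ∀ u w, ⟪Rxx u, w⟫ = ⟪u, Rxx w⟫)
    (hpos : ∀ u, 0 ≤ ⟪Rxx u, u⟫)
    (hcompact : IsCompactOperator Rxx)
    (θ : ℕ → Lp ℝ 2 (leb a₁ b₁)) (hθon : Orthonormal ℝ θ)
    (lamX : ℕ → ℝ) (hlamX : ∀ m, 0 < lamX m)
    (htrace : Summable lamX)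
    (hθeig : ∀ m, Rxx (θ m) = lamX m • θ m)
    (hθspan : (Submodule.span ℝ (Set.range θ)).topologicalClosure = (LinearMap.ker (Rxx : _ →ₗ[ℝ] Lp ℝ 2 (leb a₁ b₁)))ᗮ)
    (e : ℕ → Lp ℝ 2 (leb a₂ b₂)) (heon : Orthonormal ℝ e)
    (hebasis : (Submodule.span ℝ (Set.range e)).topologicalClosure = ⊤)
    (Γ : Lp ℝ 2 ((leb a₁ b₁).prod (leb a₂ b₂)) →L[ℝ] Lp ℝ 2 ((leb a₁ b₁).prod (leb a₂ b₂)))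
    (hΓ : ∀ (u : Lp ℝ 2 (leb a₁ b₁)) (v : Lp ℝ 2 (leb a₂ b₂)),
      Γ (tensor u v) = tensor (Rxx u) v) :
    ∀ g : Lp ℝ 2 ((leb a₁ b₁).prod (leb a₂ b₂)),
      g ∈ Set.range Γ ↔
        (g ∈ (LinearMap.ker (Γ : _ →ₗ[ℝ] Lp ℝ 2 ((leb a₁ b₁).prod (leb a₂ b₂))))ᗮ ∧
          Summable (fun mj : ℕ × ℕ =>
            (lamX mj.1) ⁻¹ ^ 2 * ⟪g, tensor (θ mj.1) (e mj.2)⟫ ^ 2)) := by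
  haveI hfin₁ : IsFiniteMeasure (leb a₁ b₁) := ⟨by
    rw [Measure.restrict_apply_univ]; simp [Real.volume_Icc]⟩
  haveI hfin₂ : IsFiniteMeasure (leb a₂ b₂) := ⟨by
    rw [Measure.restrict_apply_univ]; simp [Real.volume_Icc]⟩
  intro g
  set F : ℕ × ℕ → (Lp ℝ 2 ((leb a₁ b₁).prod (leb a₂ b₂))) := fun mj => tensor (θ mj.1) (e mj.2) with hF
  -- orthonormality of the doubly-indexed family
  have hFon : Orthonormal ℝ F := by
    rw [orthonormal_iff_ite]
    intro i j
    have : ⟪F i, F j⟫ = ⟪θ i.1, θ j.1⟫ * ⟪e i.2, e j.2⟫ := inner_tensor _ _ _ _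
    rw [this, orthonormal_iff_ite.1 hθon i.1 j.1, orthonormal_iff_ite.1 heon i.2 j.2]
    by_cases h1 : i.1 = j.1 <;> by_cases h2 : i.2 = j.2 <;>
      simp [h1, h2, Prod.ext_iff]
  -- density of the span of tensors
  have hall : ∀ x : (Lp ℝ 2 ((leb a₁ b₁).prod (leb a₂ b₂))),
      x ∈ (Submodule.span ℝ {w : (Lp ℝ 2 ((leb a₁ b₁).prod (leb a₂ b₂))) | ∃ u v, w = tensor u v}).topologicalClosure := by
    rw [dense_tensor]; exact fun x => Submodule.mem_top
  -- self-adjointness of Γ on tensors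
  have hΓgen : ∀ u v u' v',
      ⟪Γ (tensor u v), tensor u' v'⟫ = ⟪tensor u v, Γ (tensor u' v')⟫ := by
    intro u v u' v'
    rw [hΓ, hΓ, inner_tensor, inner_tensor, hsa]
  -- step A: one argument a tensor
  have hA : ∀ u v (z : (Lp ℝ 2 ((leb a₁ b₁).prod (leb a₂ b₂)))), ⟪Γ (tensor u v), z⟫ = ⟪tensor u v, Γ z⟫ := by
    intro u v z
    set f : (Lp ℝ 2 ((leb a₁ b₁).prod (leb a₂ b₂))) →L[ℝ] ℝ :=
      innerSL ℝ (Γ (tensor u v)) - (innerSL ℝ (tensor u v)).comp Γ with hf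
    have hzero : ∀ y ∈ Submodule.span ℝ {w : (Lp ℝ 2 ((leb a₁ b₁).prod (leb a₂ b₂))) | ∃ u v, w = tensor u v}, f y = 0 := by
      intro y hy
      induction hy using Submodule.span_induction with
      | mem w hw =>
        obtain ⟨u', v', rfl⟩ := hw
        have : f (tensor u' v')
            = ⟪Γ (tensor u v), tensor u' v'⟫ - ⟪tensor u v, Γ (tensor u' v')⟫ := rfl
        rw [this, hΓgen u v u' v', sub_self]
      | zero => simp
      | add a b _ _ ha hb => rw [map_add, ha, hb, add_zero]
      | smul c a _ ha => rw [_root_.map_smul, ha, smul_zero]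
    have h0 : f z = 0 := clm_zero_of_closure hzero (hall z)
    have : ⟪Γ (tensor u v), z⟫ - ⟪tensor u v, Γ z⟫ = 0 := h0
    linarith
  -- full self-adjointness
  have hΓsa : ∀ x z : (Lp ℝ 2 ((leb a₁ b₁).prod (leb a₂ b₂))), ⟪Γ x, z⟫ = ⟪x, Γ z⟫ := by
    intro x z
    set f : (Lp ℝ 2 ((leb a₁ b₁).prod (leb a₂ b₂))) →L[ℝ] ℝ := (innerSL ℝ z).comp Γ - innerSL ℝ (Γ z) with hf
    have hzero : ∀ y ∈ Submodule.span ℝ {w : (Lp ℝ 2 ((leb a₁ b₁).prod (leb a₂ b₂))) | ∃ u v, w = tensor u v}, f y = 0 := by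
      intro y hy
      induction hy using Submodule.span_induction with
      | mem w hw =>
        obtain ⟨u', v', rfl⟩ := hw
        have h1 : f (tensor u' v') = ⟪z, Γ (tensor u' v')⟫ - ⟪Γ z, tensor u' v'⟫ := rfl
        have h2 := hA u' v' z
        rw [h1]
        have e1 := real_inner_comm z (Γ (tensor u' v'))
        have e2 := real_inner_comm (Γ z) (tensor u' v')
        linarith
      | zero => simp
      | add a b _ _ ha hb => rw [map_add, ha, hb, add_zero]
      | smul c a _ ha => rw [_root_.map_smul, ha, smul_zero]
    have h0 : f x = 0 := clm_zero_of_closure hzero (hall x)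
    have h6 : ⟪z, Γ x⟫ - ⟪Γ z, x⟫ = 0 := h0
    have e1 := real_inner_comm z (Γ x)
    have e2 := real_inner_comm (Γ z) x
    linarith
  -- the closed span of the doubly-indexed family
  set W := (Submodule.span ℝ (Set.range F)).topologicalClosure with hW
  have hWclosed : IsClosed (W : Set (Lp ℝ 2 ((leb a₁ b₁).prod (leb a₂ b₂)))) := Submodule.isClosed_topologicalClosure _
  -- tensors with first factor in (ker Rxx)ᗮ lie in W
  have ha : ∀ m (v : Lp ℝ 2 (leb a₂ b₂)), tensor (θ m) v ∈ W := by
    intro m v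
    have hsub : Submodule.span ℝ (Set.range e) ≤
        Submodule.comap ((tensorRightCLM (θ m) :
          Lp ℝ 2 (leb a₂ b₂) →L[ℝ] (Lp ℝ 2 ((leb a₁ b₁).prod (leb a₂ b₂)))) : Lp ℝ 2 (leb a₂ b₂) →ₗ[ℝ] (Lp ℝ 2 ((leb a₁ b₁).prod (leb a₂ b₂)))) W := by
      rw [Submodule.span_le]
      rintro _ ⟨j, rfl⟩
      show tensor (θ m) (e j) ∈ W
      exact Submodule.le_topologicalClosure _ (Submodule.subset_span ⟨(m, j), rfl⟩)
    have hclosed : IsClosed ((Submodule.comap ((tensorRightCLM (θ m) :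
        Lp ℝ 2 (leb a₂ b₂) →L[ℝ] (Lp ℝ 2 ((leb a₁ b₁).prod (leb a₂ b₂)))) : Lp ℝ 2 (leb a₂ b₂) →ₗ[ℝ] (Lp ℝ 2 ((leb a₁ b₁).prod (leb a₂ b₂)))) W) :
          Set (Lp ℝ 2 (leb a₂ b₂))) :=
      hWclosed.preimage (tensorRightCLM (θ m)).continuous
    have hle := Submodule.topologicalClosure_minimal _ hsub hclosed
    rw [hebasis] at hle
    exact Submodule.mem_comap.1 (hle (Submodule.mem_top (x := v)))
  have hb : ∀ w ∈ (LinearMap.ker (Rxx : _ →ₗ[ℝ] Lp ℝ 2 (leb a₁ b₁)))ᗮ, ∀ v, tensor w v ∈ W := by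
    intro w hw v
    have hsub : Submodule.span ℝ (Set.range θ) ≤
        Submodule.comap ((tensorLeftCLM (μ := leb a₁ b₁) v) :
          Lp ℝ 2 (leb a₁ b₁) →ₗ[ℝ] (Lp ℝ 2 ((leb a₁ b₁).prod (leb a₂ b₂)))) W := by
      rw [Submodule.span_le]
      rintro _ ⟨m, rfl⟩
      exact ha m v
    have hclosed : IsClosed ((Submodule.comap ((tensorLeftCLM (μ := leb a₁ b₁) v) :
        Lp ℝ 2 (leb a₁ b₁) →ₗ[ℝ] (Lp ℝ 2 ((leb a₁ b₁).prod (leb a₂ b₂)))) W) : Set (Lp ℝ 2 (leb a₁ b₁))) :=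
      hWclosed.preimage (tensorLeftCLM v).continuous
    have hle := Submodule.topologicalClosure_minimal _ hsub hclosed
    rw [hθspan] at hle
    exact Submodule.mem_comap.1 (hle hw)
  have hRmem : ∀ u, Rxx u ∈ (LinearMap.ker (Rxx : _ →ₗ[ℝ] Lp ℝ 2 (leb a₁ b₁)))ᗮ := by
    intro u
    rw [Submodule.mem_orthogonal]
    intro k hk
    have hk' : Rxx k = 0 := LinearMap.mem_ker.1 hk
    rw [← hsa k u, hk', inner_zero_left]
  -- orthogonality to all F mj implies membership in ker Γ
  have hkerΓ : ∀ h : (Lp ℝ 2 ((leb a₁ b₁).prod (leb a₂ b₂))), (∀ mj, ⟪h, F mj⟫ = 0) → Γ h = 0 := by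
    intro h hh
    have hWzero : ∀ x ∈ W, ⟪h, x⟫ = 0 := fun x hx =>
      inner_zero_of_closure (S := Set.range F) (by rintro _ ⟨mj, rfl⟩; exact hh mj) hx
    have hz : ∀ z : (Lp ℝ 2 ((leb a₁ b₁).prod (leb a₂ b₂))), ⟪Γ h, z⟫ = 0 := by
      intro z
      refine clm_zero_of_closure (f := innerSL ℝ (Γ h)) ?_ (hall z)
      intro y hy
      induction hy using Submodule.span_induction with
      | mem w hw =>
        obtain ⟨u, v, rfl⟩ := hw
        have : ⟪Γ h, tensor u v⟫ = ⟪h, Γ (tensor u v)⟫ := hΓsa h (tensor u v)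
        show ⟪Γ h, tensor u v⟫ = 0
        rw [this, hΓ]
        exact hWzero _ (hb (Rxx u) (hRmem u) v)
      | zero => simp
      | add a b _ _ ha' hb' => rw [map_add, ha', hb', add_zero]
      | smul c a _ ha' => rw [_root_.map_smul, ha', smul_zero]
    have := hz (Γ h)
    rwa [inner_self_eq_zero] at this
  constructor
  · rintro ⟨f, rfl⟩
    constructor
    · rw [Submodule.mem_orthogonal]
      intro k hk
      have hk' : Γ k = 0 := LinearMap.mem_ker.1 hk
      rw [← hΓsa k f, hk', inner_zero_left]
    · have hcoef : ∀ mj : ℕ × ℕ, ⟪Γ f, F mj⟫ = lamX mj.1 * ⟪f, F mj⟫ := by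
        intro mj
        rw [hΓsa f (F mj)]
        have : Γ (F mj) = lamX mj.1 • F mj := by
          show Γ (tensor (θ mj.1) (e mj.2)) = _
          rw [hΓ, hθeig, tensor_smul_left]
        rw [this, real_inner_smul_right]
      have hbessel := hFon.inner_products_summable (x := f)
      refine hbessel.congr fun mj => ?_
      have hl : lamX mj.1 ≠ 0 := (hlamX mj.1).ne'
      show ‖⟪F mj, f⟫‖ ^ 2 = (lamX mj.1)⁻¹ ^ 2 * ⟪Γ f, F mj⟫ ^ 2
      rw [hcoef mj, Real.norm_eq_abs, sq_abs, real_inner_comm]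
      field_simp
  · rintro ⟨hperp, hsum⟩
    set c : ℕ × ℕ → ℝ := fun mj => (lamX mj.1)⁻¹ * ⟪g, F mj⟫ with hc
    have hcsq : Summable fun mj => ‖c mj‖ ^ 2 := by
      refine hsum.congr fun mj => ?_
      rw [Real.norm_eq_abs, sq_abs, hc]
      show (lamX mj.1)⁻¹ ^ 2 * ⟪g, F mj⟫ ^ 2 = ((lamX mj.1)⁻¹ * ⟪g, F mj⟫) ^ 2
      ring
    have hsummable : Summable fun mj => c mj • F mj := by
      have := (hFon.orthogonalFamily.summable_iff_norm_sq_summable c).mpr hcsq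
      simpa [LinearIsometry.toSpanSingleton_apply] using this
    obtain ⟨f, hf⟩ := hsummable
    have hΓf : HasSum (fun mj => ⟪g, F mj⟫ • F mj) (Γ f) := by
      have h1 := hf.mapL Γ
      have h2 : (fun mj => Γ (c mj • F mj)) = fun mj => ⟪g, F mj⟫ • F mj := by
        funext mj
        have hl : lamX mj.1 ≠ 0 := (hlamX mj.1).ne'
        have : Γ (F mj) = lamX mj.1 • F mj := by
          show Γ (tensor (θ mj.1) (e mj.2)) = _
          rw [hΓ, hθeig, tensor_smul_left]
        rw [_root_.map_smul, this, smul_smul, hc]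
        congr 1
        field_simp
      rwa [h2] at h1
    have hinner : ∀ mj, ⟪Γ f, F mj⟫ = ⟪g, F mj⟫ := by
      intro mj₀
      have h2 := hΓf.mapL (innerSL ℝ (F mj₀))
      have h3 : (fun mj => (innerSL ℝ (F mj₀)) (⟪g, F mj⟫ • F mj))
          = fun mj => if mj = mj₀ then ⟪g, F mj₀⟫ else 0 := by
        funext mj
        have : (innerSL ℝ (F mj₀)) (⟪g, F mj⟫ • F mj)
            = ⟪g, F mj⟫ * ⟪F mj₀, F mj⟫ := by
          rw [innerSL_apply_apply, real_inner_smul_right]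
        rw [this]
        by_cases h : mj = mj₀
        · subst h
          rw [if_pos rfl, orthonormal_iff_ite.1 hFon mj mj, if_pos rfl, mul_one]
        · rw [if_neg h, orthonormal_iff_ite.1 hFon mj₀ mj,
            if_neg (fun hh => h hh.symm), mul_zero]
      rw [h3] at h2
      have h4 := hasSum_ite_eq mj₀ (⟪g, F mj₀⟫ : ℝ)
      have h5 := h4.unique h2
      exact (real_inner_comm _ _).trans h5.symm
    have hΓf_perp : Γ f ∈ (LinearMap.ker (Γ : _ →ₗ[ℝ] Lp ℝ 2 ((leb a₁ b₁).prod (leb a₂ b₂))))ᗮ := by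
      rw [Submodule.mem_orthogonal]
      intro k hk
      have hk' : Γ k = 0 := LinearMap.mem_ker.1 hk
      rw [← hΓsa k f, hk', inner_zero_left]
    have hdiff : ∀ mj, ⟪g - Γ f, F mj⟫ = 0 := by
      intro mj
      rw [inner_sub_left, hinner, sub_self]
    have hdker : Γ (g - Γ f) = 0 := hkerΓ _ hdiff
    have hdperp : g - Γ f ∈ (LinearMap.ker (Γ : _ →ₗ[ℝ] Lp ℝ 2 ((leb a₁ b₁).prod (leb a₂ b₂))))ᗮ := Submodule.sub_mem _ hperp hΓf_perp
    have hzero : g - Γ f = 0 := by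
      have h5 := (Submodule.mem_orthogonal _ _).1 hdperp (g - Γ f)
        (LinearMap.mem_ker.2 hdker)
      rwa [inner_self_eq_zero] at h5
    exact ⟨f, (sub_eq_zero.1 hzero).symm⟩
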